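/- Let μ ~ G (a prior on ℝ) and z | μ ~ N(μ, 1), with marginal density f_G(z) = ∫ φ(z − μ) dG(μ), where φ is the standard normal density. Then f_G is differentiable and E(μ | z) = z + f_G′(z)/f_G(z) (Tweedie's formula). -/

import Mathlib

open MeasureTheory Real

/-- Tweedie's formula in the normal-means empirical Bayes model: `μ ~ G` (an arbitrary
probability measure on `ℝ`), `z | μ ~ N(μ,1)`, with marginal density
`f_G(z) = ∫ φ(z−μ) dG(μ)` (`φ` the standard normal density).  Then `f_G` is
differentiable and `E(μ | z) = z + f_G′(z)/f_G(z)`. -/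
theorem tweedie_formula
    (G : Measure ℝ) [IsProbabilityMeasure G]
    (fG : ℝ → ℝ)
    (hfG : ∀ z : ℝ, fG z
      = ∫ μ, Real.exp (-((z - μ) ^ 2) / 2) / Real.sqrt (2 * Real.pi) ∂G) :
    Differentiable ℝ fG ∧
      ∀ z : ℝ,
        (∫ μ, μ * (Real.exp (-((z - μ) ^ 2) / 2) / Real.sqrt (2 * Real.pi)) ∂G) / fG z
          = z + deriv fG z / fG z := by
  have hc0 : (0:ℝ) < Real.sqrt (2 * Real.pi) := Real.sqrt_pos.2 (by positivity)
  have hc1 : (1:ℝ) ≤ Real.sqrt (2 * Real.pi) := by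
    rw [show (1:ℝ) = Real.sqrt 1 by simp]
    exact Real.sqrt_le_sqrt (by nlinarith [Real.pi_gt_three])
  set c := Real.sqrt (2 * Real.pi) with hc
  -- pointwise bound: |t| * exp (-t^2/2) ≤ 1
  have hbnd : ∀ t : ℝ, |t| * Real.exp (-(t^2)/2) ≤ 1 := by
    intro t
    have h1 : |t| ≤ Real.exp (t^2/2) := by
      have := Real.add_one_le_exp (t^2/2)
      nlinarith [sq_nonneg (|t| - 1), sq_abs t, abs_nonneg t]
    have h2 : Real.exp (-(t^2)/2) = (Real.exp (t^2/2))⁻¹ := by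
      rw [← Real.exp_neg]; ring_nf
    rw [h2]
    rw [mul_inv_le_iff₀ (Real.exp_pos _)]
    simpa using h1
  have hmeas : ∀ z : ℝ, AEStronglyMeasurable
      (fun a : ℝ => Real.exp (-((z - a)^2)/2) / c) G :=
    fun z => (Continuous.aestronglyMeasurable (by fun_prop))
  have hmeas' : ∀ z : ℝ, AEStronglyMeasurable
      (fun a : ℝ => (a - z) * (Real.exp (-((z - a)^2)/2) / c)) G :=
    fun z => (Continuous.aestronglyMeasurable (by fun_prop))
  have hint : ∀ z : ℝ, Integrable (fun a : ℝ => Real.exp (-((z - a)^2)/2) / c) G := by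
    intro z
    refine (integrable_const (1:ℝ)).mono' (hmeas z) ?_
    filter_upwards with a
    rw [Real.norm_eq_abs, abs_of_nonneg (by positivity)]
    rw [div_le_one hc0]
    calc Real.exp (-((z-a)^2)/2) ≤ 1 := by
          rw [Real.exp_le_one_iff]; nlinarith [sq_nonneg (z-a)]
      _ ≤ c := hc1
  have key : ∀ z : ℝ,
      Integrable (fun a : ℝ => (a - z) * (Real.exp (-((z - a)^2)/2) / c)) G ∧
      HasDerivAt fG (∫ a, (a - z) * (Real.exp (-((z - a)^2)/2) / c) ∂G) z := by
    intro z
    have H := hasDerivAt_integral_of_dominated_loc_of_deriv_le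
      (F := fun x a => Real.exp (-((x - a)^2)/2) / c)
      (F' := fun x a => (a - x) * (Real.exp (-((x - a)^2)/2) / c))
      (x₀ := z) (bound := fun _ => 1) (μ := G) (s := Metric.ball z 1) (Metric.ball_mem_nhds z one_pos)
      (Filter.Eventually.of_forall fun x => hmeas x)
      (hint z) (hmeas' z)
      ?_ (integrable_const 1) ?_
    · refine ⟨H.1, ?_⟩
      have hfG' : fG = fun x => ∫ a, Real.exp (-((x - a)^2)/2) / c ∂G := funext hfG
      rw [hfG']
      exact H.2
    · filter_upwards with a
      intro x _
      rw [Real.norm_eq_abs, abs_mul, abs_div, abs_of_nonneg (Real.exp_nonneg _),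
        abs_of_pos hc0]
      have h1 : |a - x| * Real.exp (-((x-a)^2)/2) ≤ 1 := by
        rw [abs_sub_comm]; exact hbnd (x - a)
      rw [mul_div_assoc' , div_le_one hc0]
      exact h1.trans hc1
    · filter_upwards with a
      intro x _
      have h1 : HasDerivAt (fun x : ℝ => -((x - a)^2)/2) (-(x - a)) x := by
        have : HasDerivAt (fun x : ℝ => x - a) 1 x := (hasDerivAt_id x).sub_const a
        have h2 := (this.fun_pow 2)
        have h3 := (h2.fun_neg).div_const 2
        exact h3.congr_deriv (by ring)
      have h4 := (h1.exp).div_const c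
      exact h4.congr_deriv (by ring)
  have hdiff : Differentiable ℝ fG := fun z => ((key z).2).differentiableAt
  refine ⟨hdiff, fun z => ?_⟩
  have hpos : 0 < fG z := by
    rw [hfG z]
    rw [integral_pos_iff_support_of_nonneg (fun a => by positivity) (hint z)]
    have : Function.support (fun a : ℝ => Real.exp (-((z - a)^2)/2) / c) = Set.univ := by
      ext a; simp only [Function.mem_support, Set.mem_univ, iff_true]
      positivity
    rw [this]
    simp
  have hderiv : deriv fG z = ∫ a, (a - z) * (Real.exp (-((z - a)^2)/2) / c) ∂G :=
    ((key z).2).deriv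
  have hsplit : (∫ a, a * (Real.exp (-((z - a)^2)/2) / c) ∂G)
      = (∫ a, (a - z) * (Real.exp (-((z - a)^2)/2) / c) ∂G) + z * fG z := by
    rw [hfG z, ← integral_const_mul]
    rw [← integral_add ((key z).1) ((hint z).const_mul z)]
    congr 1; ext a; ring
  rw [hsplit, hderiv]
  field_simp
  ring
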